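/- In a hypergraph, if a set of subtrees of a join tree pairwise share a node, then there is a node shared by all of them (Helly property for subtrees of a tree). -/

import Mathlib

open SimpleGraph Walk

section Helly

variable {V : Type*} {G : SimpleGraph V}

/-- Convexity of connected induced subgraphs of a tree: any path between two
vertices of the subtree stays inside the subtree. -/
lemma subtree_convex (hG : G.IsTree) {s : Set V} (hs : (G.induce s).Connected)
    {u v : V} (hu : u ∈ s) (hv : v ∈ s) {p : G.Walk u v} (hp : p.IsPath) :
    ∀ x ∈ p.support, x ∈ s := by
  classical
  obtain ⟨w⟩ := hs ⟨u, hu⟩ ⟨v, hv⟩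
  let w' : G.Walk u v := w.map (SimpleGraph.Embedding.induce s).toHom
  have hsup : ∀ x ∈ w'.support, x ∈ s := by
    intro x hx
    replace hx : x ∈ w.support.map (SimpleGraph.Embedding.induce (G := G) s).toHom :=
      (SimpleGraph.Walk.support_map _ _) ▸ hx
    obtain ⟨y, hy, rfl⟩ := List.mem_map.mp hx
    exact y.2
  have huniq := hG.2.path_unique ⟨p, hp⟩ w'.toPath
  intro x hx
  have hx' : x ∈ (w'.toPath : G.Walk u v).support := by
    have heq : p = (w'.toPath : G.Walk u v) := congrArg Subtype.val huniq
    rwa [heq] at hx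
  exact hsup x (Walk.support_toPath_subset w' hx')

/-- A walk of `G` whose support lies in `s` gives reachability in `G.induce s`. -/
lemma reachable_induce_of_support {s : Set V} :
    ∀ {u v : V} (p : G.Walk u v) (_ : ∀ x ∈ p.support, x ∈ s)
      (hu : u ∈ s) (hv : v ∈ s), (G.induce s).Reachable ⟨u, hu⟩ ⟨v, hv⟩ := by
  intro u v p
  induction p with
  | nil => intro _ hu hv; rfl
  | cons h p ih =>
    rename_i a b c
    intro hsup ha hc
    have hb : b ∈ s := hsup b (by simp)
    have hadj : (G.induce s).Adj ⟨a, ha⟩ ⟨b, hb⟩ := by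
      simp only [comap_adj, Function.Embedding.coe_subtype]
      exact h
    exact hadj.reachable.trans (ih (fun x hx => hsup x (by simp [hx])) hb hc)

/-- The first vertex on a walk that belongs to a given set. -/
lemma exists_first_mem {S : Set V} :
    ∀ {a b : V} (W : G.Walk a b) (_ : b ∈ S),
      ∃ (m : V) (W1 : G.Walk a m),
        (∀ x ∈ W1.support, x ∈ W.support) ∧ (W.IsPath → W1.IsPath) ∧ m ∈ S ∧
        ∀ x ∈ W1.support, x ∈ S → x = m := by
  intro a b W
  induction W with
  | nil =>
    rename_i u
    intro hb
    refine ⟨u, Walk.nil, by simp, fun _ => Walk.IsPath.nil, hb, ?_⟩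
    intro x hx _
    simpa using hx
  | cons h W ih =>
    rename_i a c b
    intro hb
    by_cases ha : a ∈ S
    · refine ⟨a, Walk.nil, by simp, fun _ => Walk.IsPath.nil, ha, ?_⟩
      intro x hx _
      simpa using hx
    · obtain ⟨m, W1, hsup, hpath, hmS, hfirst⟩ := ih hb
      refine ⟨m, Walk.cons h W1, ?_, ?_, hmS, ?_⟩
      · intro x hx
        rw [Walk.support_cons, List.mem_cons] at hx
        rw [Walk.support_cons]
        rcases hx with rfl | hx
        · exact List.mem_cons_self
        · exact List.mem_cons_of_mem _ (hsup x hx)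
      · intro hP
        rw [Walk.cons_isPath_iff] at hP ⊢
        exact ⟨hpath hP.1, fun hmem => hP.2 (hsup a hmem)⟩
      · intro x hx hxS
        rw [Walk.support_cons, List.mem_cons] at hx
        rcases hx with rfl | hx
        · exact absurd hxS ha
        · exact hfirst x hx hxS

/-- Helly property for three subtrees. -/
lemma helly_three (hG : G.IsTree) {s t r : Set V}
    (hs : (G.induce s).Connected) (ht : (G.induce t).Connected)
    (hr : (G.induce r).Connected)
    {a b c : V} (has : a ∈ s) (hat : a ∈ t) (hbt : b ∈ t) (hbr : b ∈ r)
    (hcs : c ∈ s) (hcr : c ∈ r) :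
    ∃ m, m ∈ s ∧ m ∈ t ∧ m ∈ r := by
  classical
  obtain ⟨wab⟩ := hG.1 a b
  obtain ⟨wbc⟩ := hG.1 b c
  set pab : G.Walk a b := (wab.toPath : G.Walk a b) with hpab
  set pbc : G.Walk b c := (wbc.toPath : G.Walk b c) with hpbc
  have hpabP : pab.IsPath := wab.toPath.2
  have hpbcP : pbc.IsPath := wbc.toPath.2
  have hpabt : ∀ x ∈ pab.support, x ∈ t := subtree_convex hG ht hat hbt hpabP
  have hpbcr : ∀ x ∈ pbc.support, x ∈ r := subtree_convex hG hr hbr hcr hpbcP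
  obtain ⟨m, W1, hsupW1, hW1path, hmS, hfirst⟩ :=
    exists_first_mem (S := {x | x ∈ pbc.support}) pab (Walk.start_mem_support pbc)
  have hW1P : W1.IsPath := hW1path hpabP
  have hm : m ∈ pbc.support := hmS
  set W2 : G.Walk m c := pbc.dropUntil m hm with hW2
  have hW2P : W2.IsPath := hpbcP.dropUntil hm
  have hW2sub : ∀ x ∈ W2.support, x ∈ pbc.support :=
    fun x hx => Walk.support_dropUntil_subset pbc hm hx
  have hW2nodup : W2.support.Nodup := hW2P.support_nodup
  have hW2cons : W2.support = m :: W2.support.tail := W2.support_eq_cons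
  have happ : (W1.append W2).IsPath := by
    rw [Walk.isPath_def, Walk.support_append]
    refine List.Nodup.append hW1P.support_nodup ?_ ?_
    · rw [hW2cons] at hW2nodup
      exact hW2nodup.of_cons
    · intro x hx1 hx2
      have hxm : x = m := hfirst x hx1 (hW2sub x (List.mem_of_mem_tail hx2))
      subst hxm
      rw [hW2cons, List.nodup_cons] at hW2nodup
      exact hW2nodup.1 hx2
  have hmem : m ∈ (W1.append W2).support := by
    rw [Walk.mem_support_append_iff]
    exact Or.inl (Walk.end_mem_support W1)
  have hms : m ∈ s := subtree_convex hG hs has hcs happ m hmem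
  exact ⟨m, hms, hpabt m (hsupW1 m (Walk.end_mem_support W1)), hpbcr m hm⟩

/-- The intersection of two subtrees is a subtree. -/
lemma inter_connected (hG : G.IsTree) {s t : Set V}
    (hs : (G.induce s).Connected) (ht : (G.induce t).Connected)
    (hne : (s ∩ t).Nonempty) : (G.induce (s ∩ t)).Connected := by
  classical
  rw [connected_iff]
  constructor
  · rintro ⟨u, hu⟩ ⟨v, hv⟩
    obtain ⟨w⟩ := hG.1 u v
    have hP : (w.toPath : G.Walk u v).IsPath := w.toPath.2
    have h1 : ∀ x ∈ (w.toPath : G.Walk u v).support, x ∈ s :=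
      subtree_convex hG hs hu.1 hv.1 hP
    have h2 : ∀ x ∈ (w.toPath : G.Walk u v).support, x ∈ t :=
      subtree_convex hG ht hu.2 hv.2 hP
    exact reachable_induce_of_support (w.toPath : G.Walk u v)
        (fun x hx => Set.mem_inter (h1 x hx) (h2 x hx)) hu hv
  · obtain ⟨x, hx⟩ := hne
    exact ⟨⟨x, hx⟩⟩

lemma helly_aux (hG : G.IsTree) :
    ∀ (n : ℕ) (F : Finset (Set V)), F.card ≤ n →
      (∀ s ∈ F, (G.induce s).Connected) →
      (∀ s ∈ F, ∀ t ∈ F, (s ∩ t).Nonempty) →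
      ∃ v : V, ∀ s ∈ F, v ∈ s := by
  intro n
  induction n with
  | zero =>
    intro F hF _ _
    rw [Nat.le_zero, Finset.card_eq_zero] at hF
    subst hF
    obtain ⟨v⟩ := hG.1.nonempty
    exact ⟨v, by simp⟩
  | succ n ih =>
    intro F hcard hsub hpair
    classical
    rcases F.eq_empty_or_nonempty with rfl | ⟨s, hsF⟩
    · obtain ⟨v⟩ := hG.1.nonempty
      exact ⟨v, by simp⟩
    rcases (F.erase s).eq_empty_or_nonempty with hF'e | hF'ne
    · obtain ⟨v, hv⟩ := hpair s hsF s hsF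
      refine ⟨v, fun u huF => ?_⟩
      rcases eq_or_ne u s with rfl | hus
      · exact hv.1
      · exact absurd (Finset.mem_erase.mpr ⟨hus, huF⟩) (by rw [hF'e]; simp)
    have hcard'' : ((F.erase s).image (fun u => s ∩ u)).card ≤ n := by
      have h1 : ((F.erase s).image (fun u => s ∩ u)).card ≤ (F.erase s).card :=
        Finset.card_image_le
      have h2 : (F.erase s).card < F.card := Finset.card_erase_lt_of_mem hsF
      omega
    have hsub'' : ∀ u ∈ (F.erase s).image (fun u => s ∩ u), (G.induce u).Connected := by
      intro u hu
      obtain ⟨w, hwF', rfl⟩ := Finset.mem_image.mp hu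
      have hwF : w ∈ F := Finset.mem_of_mem_erase hwF'
      exact inter_connected hG (hsub s hsF) (hsub w hwF) (hpair s hsF w hwF)
    have hpair'' : ∀ u ∈ (F.erase s).image (fun u => s ∩ u),
        ∀ u' ∈ (F.erase s).image (fun u => s ∩ u), (u ∩ u').Nonempty := by
      intro u hu u' hu'
      obtain ⟨w, hwF', rfl⟩ := Finset.mem_image.mp hu
      obtain ⟨w', hw'F', rfl⟩ := Finset.mem_image.mp hu'
      have hwF : w ∈ F := Finset.mem_of_mem_erase hwF'
      have hw'F : w' ∈ F := Finset.mem_of_mem_erase hw'F'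
      obtain ⟨a, ha⟩ := hpair w hwF s hsF
      obtain ⟨b, hb⟩ := hpair s hsF w' hw'F
      obtain ⟨c, hc⟩ := hpair w hwF w' hw'F
      obtain ⟨m, hmw, hms, hmw'⟩ :=
        helly_three hG (hsub w hwF) (hsub s hsF) (hsub w' hw'F)
          ha.1 ha.2 hb.1 hb.2 hc.1 hc.2
      exact ⟨m, ⟨hms, hmw⟩, ⟨hms, hmw'⟩⟩
    obtain ⟨v, hv⟩ := ih ((F.erase s).image (fun u => s ∩ u)) hcard'' hsub'' hpair''
    refine ⟨v, fun u huF => ?_⟩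
    rcases eq_or_ne u s with rfl | hus
    · obtain ⟨w, hwF'⟩ := hF'ne
      exact (hv (u ∩ w) (Finset.mem_image.mpr ⟨w, hwF', rfl⟩)).1
    · have huF' : u ∈ F.erase s := Finset.mem_erase.mpr ⟨hus, huF⟩
      exact (hv (s ∩ u) (Finset.mem_image.mpr ⟨u, huF', rfl⟩)).2

end Helly

/-- **Helly property for subtrees of a tree.**
A tree is a finite connected acyclic simple graph.  A subtree is a connected
(induced) subgraph, identified with its vertex set.  If every two subtrees in a
finite family share a vertex, then all subtrees in the family share a vertex. -/
theorem helly_subtrees {V : Type*} [Fintype V] (G : SimpleGraph V) (hG : G.IsTree)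
    (F : Finset (Set V))
    (hsub : ∀ s ∈ F, (G.induce s).Connected)
    (hpair : ∀ s ∈ F, ∀ t ∈ F, (s ∩ t).Nonempty) :
    ∃ v : V, ∀ s ∈ F, v ∈ s :=
  helly_aux hG F.card F le_rfl hsub hpair
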